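/- Let L/K be a finite Galois extension of degree n with Galois group G, let σ be a non-identity element of G, let b ∈ L be nonzero, and let F be the fixed field of σ². If σ(b)b⁻¹ = σ²(c)c⁻¹ for some nonzero c ∈ L, then the rank of the alternating form f_{b,σ} equals n − [F:K] = n − n/[L:F]. If no such c exists, then f_{b,σ} has rank n, i.e. it is non-degenerate. -/

import Mathlib

variable {K L : Type*} [Field K] [Field L] [Algebra K L]

/-- The alternating bilinear form `f_{b,σ}(x,y) = Tr^L_K (b * (x * σ y - σ x * y))`,
where `Tr^L_K` is the trace form of the extension `L/K`. -/
noncomputable def galoisAltForm (b : L) (σ : L ≃ₐ[K] L) : (L →ₗ[K] L →ₗ[K] K) :=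
  LinearMap.mk₂ K (fun x y => Algebra.trace K L (b * (x * σ y - σ x * y)))
    (fun x x' y => by
      try dsimp only
      rw [show b * ((x + x') * σ y - σ (x + x') * y)
            = b * (x * σ y - σ x * y) + b * (x' * σ y - σ x' * y) by
          rw [map_add σ]; ring, map_add])
    (fun a x y => by
      try dsimp only
      rw [show b * ((a • x) * σ y - σ (a • x) * y)
            = a • (b * (x * σ y - σ x * y)) by
          rw [map_smul σ]
          simp only [smul_sub, smul_mul_assoc, mul_smul_comm, mul_sub], map_smul])
    (fun x y y' => by
      try dsimp only
      rw [show b * (x * σ (y + y') - σ x * (y + y'))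
            = b * (x * σ y - σ x * y) + b * (x * σ y' - σ x * y') by
          rw [map_add σ]; ring, map_add])
    (fun a x y => by
      try dsimp only
      rw [show b * (x * σ (a • y) - σ x * (a • y))
            = a • (b * (x * σ y - σ x * y)) by
          rw [map_smul σ]
          simp only [smul_sub, smul_mul_assoc, mul_smul_comm, mul_sub], map_smul])

/-- The rank of a bilinear form on `L`: `dim_K L` minus the dimension of its radical
`{x : L | ∀ y, f x y = 0}` (which is the kernel of `f` viewed as a map `L →ₗ[K] (L →ₗ[K] K)`). -/
noncomputable def formRank (f : (L →ₗ[K] L →ₗ[K] K)) : ℕ :=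
  Module.finrank K L - Module.finrank K (LinearMap.ker f)


lemma mem_fixedField_zpowers_iff (τ : L ≃ₐ[K] L) (x : L) :
    x ∈ IntermediateField.fixedField (Subgroup.zpowers τ) ↔ τ x = x := by
  constructor
  · intro h
    exact h ⟨τ, Subgroup.mem_zpowers τ⟩
  · intro h g
    obtain ⟨g, hg⟩ := g
    obtain ⟨k, hk⟩ := hg
    have hn : ∀ m : ℕ, (τ ^ m) x = x := by
      intro m
      induction m with
      | zero => simp
      | succ m ih => rw [pow_succ, AlgEquiv.mul_apply, h, ih]
    have hinvn : ∀ m : ℕ, ((τ ^ m)⁻¹) x = x := by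
      intro m
      have : ((τ ^ m)⁻¹) ((τ ^ m) x) = x := by
        rw [← AlgEquiv.mul_apply, inv_mul_cancel, AlgEquiv.one_apply]
      rwa [hn m] at this
    subst hk
    show (τ ^ k) x = x
    induction k using Int.induction_on with
    | zero => simp
    | succ n _ =>
        rw [show ((n : ℤ) + 1) = ((n + 1 : ℕ) : ℤ) by push_cast; ring, zpow_natCast]
        exact hn _
    | pred n _ =>
        rw [show (-(n : ℤ) - 1) = -((n + 1 : ℕ) : ℤ) by push_cast; ring, zpow_neg, zpow_natCast]
        exact hinvn _

lemma galoisAltForm_apply' (b : L) (σ : L ≃ₐ[K] L) (x y : L) :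
    galoisAltForm b σ x y = Algebra.traceForm K L (σ.symm (b * x) - b * σ x) y := by
  show Algebra.trace K L (b * (x * σ y - σ x * y)) = _
  have h1 : b * (x * σ y - σ x * y) = (b * x) * σ y - (b * σ x) * y := by ring
  rw [h1, Algebra.traceForm_apply, sub_mul, map_sub, map_sub]
  congr 1
  rw [← Algebra.trace_eq_of_algEquiv σ.symm ((b * x) * σ y)]
  congr 1
  rw [map_mul]
  simp

lemma mem_ker_galoisAltForm [FiniteDimensional K L] [IsGalois K L]
    (b : L) (σ : L ≃ₐ[K] L) (x : L) :
    x ∈ LinearMap.ker (galoisAltForm b σ) ↔ b * x = σ b * (σ ^ 2) x := by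
  have h2 : (σ ^ 2) x = σ (σ x) := by rw [sq, AlgEquiv.mul_apply]
  rw [LinearMap.mem_ker, h2]
  constructor
  · intro h
    have key : σ.symm (b * x) - b * σ x = 0 := by
      apply (traceForm_nondegenerate K L).1
      intro y
      rw [← galoisAltForm_apply', h]
      rfl
    have he : σ.symm (b * x) = b * σ x := sub_eq_zero.mp key
    rw [AlgEquiv.symm_apply_eq, map_mul] at he
    exact he
  · intro h
    ext y
    rw [galoisAltForm_apply']
    have : σ.symm (b * x) = b * σ x := by
      rw [AlgEquiv.symm_apply_eq, map_mul, h]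
    rw [this, sub_self]
    simp

/-- rank of `f_{b,σ}` in terms of the fixed field `F` of `σ²`:
if `σ(b)b⁻¹ = σ²(c)c⁻¹` for some nonzero `c` then the rank is `n − [F:K] = n − n/[L:F]`,
and otherwise `f_{b,σ}` is non-degenerate of rank `n`. -/
theorem statement2 [FiniteDimensional K L] [IsGalois K L]
    (n : ℕ) (hn : Module.finrank K L = n)
    (σ : L ≃ₐ[K] L) (hσ : σ ≠ 1) (b : L) (hb : b ≠ 0)
    (F : IntermediateField K L)
    (hF : F = IntermediateField.fixedField (Subgroup.zpowers (σ ^ 2))) :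
    ((∃ c : L, c ≠ 0 ∧ σ b * b⁻¹ = (σ ^ 2) c * c⁻¹) →
        formRank (galoisAltForm b σ) = n - Module.finrank K F ∧
        formRank (galoisAltForm b σ) = n - n / Module.finrank F L) ∧
    ((¬ ∃ c : L, c ≠ 0 ∧ σ b * b⁻¹ = (σ ^ 2) c * c⁻¹) →
        formRank (galoisAltForm b σ) = n ∧
        LinearMap.ker (galoisAltForm b σ) = ⊥) := by
  subst hF
  have hL := hn
  constructor
  · rintro ⟨c, hc0, hc⟩
    have hσ2c : (σ ^ 2) c ≠ 0 := fun h => hc0 (((σ ^ 2).map_eq_zero_iff).mp h)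
    have hc' : σ b * c = (σ ^ 2) c * b := by
      field_simp at hc
      linear_combination hc
    set F := IntermediateField.fixedField (Subgroup.zpowers (σ ^ 2)) with hFdef
    set e : L ≃ₗ[K] L := (LinearEquiv.smulOfNeZero L L c hc0).restrictScalars K with he
    have heapp : ∀ x : L, e x = c * x := fun x => rfl
    have hkey : ∀ x : L, (b * x = σ b * (σ ^ 2) x) ↔ ((σ ^ 2) (c * x) = c * x) := by
      intro x
      rw [map_mul]
      constructor
      · intro h
        apply mul_left_cancel₀ hb
        linear_combination - ((σ ^ 2) x) * hc' - c * h
      · intro h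
        apply mul_left_cancel₀ hc0
        linear_combination - b * h - ((σ ^ 2) x) * hc'
    have hker : LinearMap.ker (galoisAltForm b σ)
        = (Subalgebra.toSubmodule F.toSubalgebra).comap (e : L →ₗ[K] L) := by
      ext x
      rw [mem_ker_galoisAltForm, Submodule.mem_comap]
      have : (e : L →ₗ[K] L) x = c * x := rfl
      rw [this]
      show _ ↔ c * x ∈ F
      rw [hFdef, mem_fixedField_zpowers_iff]
      exact hkey x
    have hker2 : LinearMap.ker (galoisAltForm b σ)
        = (Subalgebra.toSubmodule F.toSubalgebra).map (e.symm : L →ₗ[K] L) := by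
      rw [hker, Submodule.comap_equiv_eq_map_symm]
    have hrank : Module.finrank K (LinearMap.ker (galoisAltForm b σ))
        = Module.finrank K F := by
      rw [hker2]
      rw [LinearEquiv.finrank_map_eq e.symm]
      exact Subalgebra.finrank_toSubmodule F.toSubalgebra
    have h1 : formRank (galoisAltForm b σ) = n - Module.finrank K F := by
      rw [formRank, hrank, hL]
    refine ⟨h1, ?_⟩
    rw [h1]
    congr 1
    have htower : Module.finrank K F * Module.finrank F L = Module.finrank K L :=
      Module.finrank_mul_finrank K F L
    have hpos : 0 < Module.finrank F L := Module.finrank_pos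
    rw [hL] at htower
    rw [← htower, Nat.mul_div_cancel _ hpos]
  · intro hnc
    have hker : LinearMap.ker (galoisAltForm b σ) = ⊥ := by
      rw [LinearMap.ker_eq_bot']
      intro x hx
      by_contra hx0
      apply hnc
      have hx' : b * x = σ b * (σ ^ 2) x :=
        (mem_ker_galoisAltForm b σ x).mp (LinearMap.mem_ker.mpr hx)
      refine ⟨x⁻¹, inv_ne_zero hx0, ?_⟩
      have hσ2x : (σ ^ 2) x ≠ 0 := fun h => hx0 (((σ ^ 2).map_eq_zero_iff).mp h)
      rw [map_inv₀, inv_inv, mul_comm (((σ ^ 2) x)⁻¹) x, ← div_eq_mul_inv, ← div_eq_mul_inv,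
        div_eq_div_iff hb hσ2x]
      linear_combination - hx'
    refine ⟨?_, hker⟩
    rw [formRank, hker, finrank_bot, Nat.sub_zero, hL]
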